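/- Concavity Lemma: under the stated hypotheses on ψ and ξ, the function r ↦ exp(G(ξ(r))) is concave on [0, r₀]. -/

import Mathlib

open Set

/-- The function `G(η) := inf_{0 ≤ θ ≤ 1} (ψ(1-θ) + θη)`. -/
noncomputable def G (ψ : ℝ → ℝ) (η : ℝ) : ℝ :=
  sInf ((fun θ : ℝ => ψ (1 - θ) + θ * η) '' Icc 0 1)

lemma exists_theta (ψ' : ℝ → ℝ) (hcont : ContinuousOn ψ' (Icc 0 1))
    (hsm : StrictMonoOn ψ' (Icc 0 1)) (h0' : ψ' 0 = 0) (hM : 0 < ψ' 1) :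
    ∃ T : ℝ → ℝ, Continuous T ∧ (∀ η, T η ∈ Icc (0:ℝ) 1) ∧
      (∀ η ∈ Icc 0 (ψ' 1), ψ' (1 - T η) = η) ∧
      (∀ η ≤ 0, T η = 1) ∧ (∀ η, ψ' 1 ≤ η → T η = 0) := by
  set M := ψ' 1 with hMdef
  have h01 : (0:ℝ) ∈ Icc (0:ℝ) 1 := ⟨le_rfl, zero_le_one⟩
  have h11 : (1:ℝ) ∈ Icc (0:ℝ) 1 := ⟨zero_le_one, le_rfl⟩
  have hmem : ∀ x ∈ Icc (0:ℝ) 1, ψ' x ∈ Icc (0:ℝ) M := by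
    intro x hx
    constructor
    · rw [← h0']; exact hsm.monotoneOn h01 hx hx.1
    · exact hsm.monotoneOn hx h11 hx.2
  have hsurj : ∀ y ∈ Icc (0:ℝ) M, ∃ x ∈ Icc (0:ℝ) 1, ψ' x = y := by
    intro y hy
    have := intermediate_value_Icc (zero_le_one) hcont
    rw [h0'] at this
    obtain ⟨x, hx, hxy⟩ := this hy
    exact ⟨x, hx, hxy⟩
  set f : Icc (0:ℝ) 1 → Icc (0:ℝ) M := fun x => ⟨ψ' x, hmem x x.2⟩ with hfdef
  have hbij : Function.Bijective f := by
    constructor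
    · intro a b hab
      exact Subtype.ext (hsm.injOn a.2 b.2 (congrArg Subtype.val hab))
    · intro y
      obtain ⟨x, hx, hxy⟩ := hsurj y y.2
      exact ⟨⟨x, hx⟩, Subtype.ext hxy⟩
  set e : Icc (0:ℝ) 1 ≃ Icc (0:ℝ) M := Equiv.ofBijective f hbij with hedef
  have hce : Continuous e := by
    apply Continuous.subtype_mk
    exact continuousOn_iff_continuous_restrict.1 hcont
  set hom : Icc (0:ℝ) 1 ≃ₜ Icc (0:ℝ) M := hce.homeoOfEquivCompactToT2 with homdef
  set T : ℝ → ℝ := fun η => 1 - ((hom.symm (projIcc 0 M hM.le η) : Icc (0:ℝ) 1) : ℝ) with hTdef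
  have happ : ∀ x : Icc (0:ℝ) 1, (hom x : ℝ) = ψ' x := fun x => rfl
  have hkey : ∀ y : Icc (0:ℝ) M, ψ' ((hom.symm y : Icc (0:ℝ) 1) : ℝ) = (y : ℝ) := by
    intro y
    have := hom.apply_symm_apply y
    calc ψ' ((hom.symm y : Icc (0:ℝ) 1) : ℝ) = ((hom (hom.symm y) : Icc (0:ℝ) M) : ℝ) := rfl
      _ = (y : ℝ) := by rw [this]
  refine ⟨T, ?_, ?_, ?_, ?_, ?_⟩
  · exact continuous_const.sub
      (continuous_subtype_val.comp (hom.symm.continuous.comp continuous_projIcc))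
  · intro η
    have := (hom.symm (projIcc 0 M hM.le η)).2
    exact ⟨by simp [hTdef]; linarith [this.2], by simp [hTdef]; linarith [this.1]⟩
  · intro η hη
    have : 1 - T η = ((hom.symm (projIcc 0 M hM.le η) : Icc (0:ℝ) 1) : ℝ) := by
      simp [hTdef]
    rw [this, hkey, projIcc_of_mem hM.le hη]
  · intro η hη
    have hproj : projIcc 0 M hM.le η = ⟨0, left_mem_Icc.2 hM.le⟩ := projIcc_of_le_left hM.le hη
    have h0e : hom ⟨0, h01⟩ = ⟨0, left_mem_Icc.2 hM.le⟩ := by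
      apply Subtype.ext; rw [happ]; exact h0'
    have : hom.symm ⟨0, left_mem_Icc.2 hM.le⟩ = ⟨0, h01⟩ := by
      rw [← h0e, Homeomorph.symm_apply_apply]
    simp [hTdef, hproj, this]
  · intro η hη
    have hproj : projIcc 0 M hM.le η = ⟨M, right_mem_Icc.2 hM.le⟩ := projIcc_of_right_le hM.le hη
    have h1e : hom ⟨1, h11⟩ = ⟨M, right_mem_Icc.2 hM.le⟩ := by
      apply Subtype.ext; rw [happ]
    have : hom.symm ⟨M, right_mem_Icc.2 hM.le⟩ = ⟨1, h11⟩ := by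
      rw [← h1e, Homeomorph.symm_apply_apply]
    simp [hTdef, hproj, this]

/-- Concavity Lemma: suppose `ψ : [0,1] → ℝ₊` is convex increasing with
`ψ(0) = 0 = ψ'(0)` and `ψ'' > 0` on `(0,1)`; suppose `ξ : [0,r₀] → ℝ₊` is continuous,
twice differentiable on `(0,r₀)`, and `ξ'' ≤ c·(ξ')²` there for some finite constant `c`.
If `ψ''(1-θ) ≤ 1/(θ² + θc)` for `0 < θ < 1`, then `r ↦ exp(G(ξ(r)))` is concave on `[0,r₀]`. -/
theorem stmt11 (ψ ψ' ψ'' : ℝ → ℝ)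
    (hconv : ConvexOn ℝ (Icc 0 1) ψ)
    (hmono : MonotoneOn ψ (Icc 0 1))
    (hnonneg : ∀ θ ∈ Icc (0:ℝ) 1, 0 ≤ ψ θ)
    (h0 : ψ 0 = 0)
    (hd1 : ∀ t ∈ Icc (0:ℝ) 1, HasDerivAt ψ (ψ' t) t)
    (hd2 : ∀ t ∈ Icc (0:ℝ) 1, HasDerivAt ψ' (ψ'' t) t)
    (h0' : ψ' 0 = 0)
    (hpos : ∀ θ ∈ Ioo (0:ℝ) 1, 0 < ψ'' θ)
    (r₀ : ℝ) (hr₀ : 0 < r₀)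
    (ξ ξ' ξ'' : ℝ → ℝ)
    (hξcont : ContinuousOn ξ (Icc 0 r₀))
    (hξnn : ∀ r ∈ Icc 0 r₀, 0 ≤ ξ r)
    (hξd1 : ∀ r ∈ Ioo 0 r₀, HasDerivAt ξ (ξ' r) r)
    (hξd2 : ∀ r ∈ Ioo 0 r₀, HasDerivAt ξ' (ξ'' r) r)
    (c : ℝ)
    (hcξ : ∀ r ∈ Ioo 0 r₀, ξ'' r ≤ c * (ξ' r) ^ 2)
    (hψ'' : ∀ θ ∈ Ioo (0:ℝ) 1, ψ'' (1 - θ) ≤ 1 / (θ ^ 2 + θ * c)) :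
    ConcaveOn ℝ (Icc 0 r₀) (fun r => Real.exp (G ψ (ξ r))) := by
  have h01 : (0:ℝ) ∈ Icc (0:ℝ) 1 := ⟨le_rfl, zero_le_one⟩
  have h11 : (1:ℝ) ∈ Icc (0:ℝ) 1 := ⟨zero_le_one, le_rfl⟩
  have hψc : ContinuousOn ψ (Icc 0 1) := fun x hx => (hd1 x hx).continuousAt.continuousWithinAt
  have hψ'c : ContinuousOn ψ' (Icc 0 1) := fun x hx => (hd2 x hx).continuousAt.continuousWithinAt
  have hsm : StrictMonoOn ψ' (Icc 0 1) := by
    apply strictMonoOn_of_deriv_pos (convex_Icc 0 1) hψ'c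
    rw [interior_Icc]
    intro x hx
    rw [(hd2 x (Ioo_subset_Icc_self hx)).deriv]
    exact hpos x hx
  set M := ψ' 1 with hMdef
  have hM : 0 < M := by
    have := hsm h01 h11 one_pos
    rwa [h0'] at this
  obtain ⟨T, Tcont, Tmem, Tinv, Tle, Tge⟩ := exists_theta ψ' hψ'c hsm h0' hM
  -- T maps (0,M) into (0,1)
  have TIoo : ∀ η ∈ Ioo 0 M, T η ∈ Ioo (0:ℝ) 1 := by
    intro η hη
    have hmem : 1 - T η ∈ Icc (0:ℝ) 1 := ⟨by linarith [(Tmem η).2], by linarith [(Tmem η).1]⟩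
    have hval : ψ' (1 - T η) = η := Tinv η ⟨hη.1.le, hη.2.le⟩
    have hne0 : 1 - T η ≠ 0 := by
      intro h; rw [h, h0'] at hval; exact hη.1.ne hval
    have hne1 : 1 - T η ≠ 1 := by
      intro h; rw [h] at hval; exact hη.2.ne' hval
    constructor
    · have h' : 1 - T η < 1 := lt_of_le_of_ne (by linarith [(Tmem η).1]) hne1
      linarith
    · have h' : 0 < 1 - T η := lt_of_le_of_ne (by linarith [(Tmem η).2]) (Ne.symm hne0)
      linarith
  -- tangent line inequality
  have tangent : ∀ t ∈ Icc (0:ℝ) 1, ∀ s ∈ Icc (0:ℝ) 1, ψ t + ψ' t * (s - t) ≤ ψ s := by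
    intro t ht s hs
    rcases lt_trichotomy t s with h | h | h
    · obtain ⟨ζ, hζ, hζ'⟩ := exists_hasDerivAt_eq_slope ψ ψ' h
        (hψc.mono (Icc_subset_Icc ht.1 hs.2))
        (fun x hx => hd1 x ⟨le_trans ht.1 hx.1.le, le_trans hx.2.le hs.2⟩)
      have hζmem : ζ ∈ Icc (0:ℝ) 1 := ⟨le_trans ht.1 hζ.1.le, le_trans hζ.2.le hs.2⟩
      have h1 : ψ' t ≤ ψ' ζ := hsm.monotoneOn ht hζmem hζ.1.le
      have h2 : ψ s - ψ t = ψ' ζ * (s - t) := by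
        rw [hζ', div_mul_cancel₀ _ (sub_ne_zero.2 h.ne')]
      nlinarith
    · subst h; simp
    · obtain ⟨ζ, hζ, hζ'⟩ := exists_hasDerivAt_eq_slope ψ ψ' h
        (hψc.mono (Icc_subset_Icc hs.1 ht.2))
        (fun x hx => hd1 x ⟨le_trans hs.1 hx.1.le, le_trans hx.2.le ht.2⟩)
      have hζmem : ζ ∈ Icc (0:ℝ) 1 := ⟨le_trans hs.1 hζ.1.le, le_trans hζ.2.le ht.2⟩
      have h1 : ψ' ζ ≤ ψ' t := hsm.monotoneOn hζmem ht hζ.2.le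
      have h2 : ψ t - ψ s = ψ' ζ * (t - s) := by
        rw [hζ', div_mul_cancel₀ _ (sub_ne_zero.2 h.ne')]
      nlinarith
  -- minimizer property
  have hmin : ∀ η : ℝ, ∀ θ ∈ Icc (0:ℝ) 1, ψ (1 - T η) + T η * η ≤ ψ (1 - θ) + θ * η := by
    intro η θ hθ
    have ht : 1 - T η ∈ Icc (0:ℝ) 1 := ⟨by linarith [(Tmem η).2], by linarith [(Tmem η).1]⟩
    have hs : 1 - θ ∈ Icc (0:ℝ) 1 := ⟨by linarith [hθ.2], by linarith [hθ.1]⟩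
    have key : ψ (1 - T η) + η * ((1 - θ) - (1 - T η)) ≤ ψ (1 - θ) := by
      rcases le_or_gt η 0 with hη | hη
      · have hT1 : T η = 1 := Tle η hη
        rw [hT1]
        simp [h0]
        have := hnonneg (1 - θ) hs
        nlinarith [hθ.1, hθ.2]
      · rcases le_or_gt η M with hηM | hηM
        · have := tangent (1 - T η) ht (1 - θ) hs
          rw [Tinv η ⟨hη.le, hηM⟩] at this
          linarith
        · have hT0 : T η = 0 := Tge η hηM.le
          rw [hT0]
          have := tangent 1 h11 (1 - θ) hs
          simp at this ⊢
          nlinarith [hθ.1, hθ.2]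
    nlinarith [key]
  -- G formula
  have hGeq : ∀ η : ℝ, G ψ η = ψ (1 - T η) + T η * η := by
    intro η
    apply IsLeast.csInf_eq
    constructor
    · exact ⟨T η, Tmem η, rfl⟩
    · rintro v ⟨θ, hθ, rfl⟩
      exact hmin η θ hθ
  -- envelope derivative
  have hGd : ∀ η : ℝ, HasDerivAt (G ψ) (T η) η := by
    intro η
    rw [hasDerivAt_iff_isLittleO, Asymptotics.isLittleO_iff]
    intro ε hε
    have hcT : ∀ᶠ y in nhds η, |T y - T η| < ε := by
      have := Metric.tendsto_nhds.mp (Tcont.tendsto η) ε hε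
      simpa [Real.dist_eq] using this
    filter_upwards [hcT] with y hy
    have h1 : G ψ y - G ψ η - (y - η) * T η ≤ 0 := by
      have := hmin y (T η) (Tmem η)
      rw [← hGeq y] at this
      rw [hGeq η]
      nlinarith [this]
    have h2 : (T y - T η) * (y - η) ≤ G ψ y - G ψ η - (y - η) * T η := by
      have := hmin η (T y) (Tmem y)
      rw [← hGeq η] at this
      rw [hGeq y]
      nlinarith [this]
    rw [Real.norm_eq_abs, Real.norm_eq_abs, smul_eq_mul]
    have hb : |(T y - T η) * (y - η)| ≤ ε * |y - η| := by
      rw [abs_mul]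
      exact mul_le_mul_of_nonneg_right hy.le (abs_nonneg _)
    rw [abs_le]
    constructor
    · calc -(ε * |y - η|) ≤ -|(T y - T η) * (y - η)| := by linarith
        _ ≤ (T y - T η) * (y - η) := neg_abs_le _
        _ ≤ _ := h2
    · calc G ψ y - G ψ η - (y - η) * T η ≤ 0 := h1
        _ ≤ ε * |y - η| := by positivity
  have hGcont : Continuous (G ψ) := by
    rw [continuous_iff_continuousAt]
    exact fun η => (hGd η).continuousAt
  -- derivative of T on (0, M)
  have hTd : ∀ η ∈ Ioo 0 M, HasDerivAt T (-(ψ'' (1 - T η))⁻¹) η := by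
    intro η hη
    have hTη : T η ∈ Ioo (0:ℝ) 1 := TIoo η hη
    have hmem : 1 - T η ∈ Ioo (0:ℝ) 1 := ⟨by linarith [hTη.2], by linarith [hTη.1]⟩
    have hinner : HasDerivAt (fun θ : ℝ => 1 - θ) (-1) (T η) := (hasDerivAt_id (T η)).const_sub 1
    have hf : HasDerivAt (fun θ : ℝ => ψ' (1 - θ)) (ψ'' (1 - T η) * (-1)) (T η) :=
      (hd2 (1 - T η) (Ioo_subset_Icc_self hmem)).comp (T η) hinner
    have hne : ψ'' (1 - T η) * (-1) ≠ 0 := by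
      have := hpos (1 - T η) hmem
      intro h; nlinarith
    have hfg : ∀ᶠ y in nhds η, ψ' (1 - T y) = y := by
      filter_upwards [isOpen_Ioo.mem_nhds hη] with y hy
      exact Tinv y ⟨hy.1.le, hy.2.le⟩
    have := HasDerivAt.of_local_left_inverse Tcont.continuousAt hf hne hfg
    rw [mul_neg_one, inv_neg] at this
    exact this
  -- key pointwise inequality for Q'
  have hkey : ∀ η ∈ Ioo 0 M, (c + T η) * T η - (ψ'' (1 - T η))⁻¹ ≤ 0 := by
    intro η hη
    have hTη : T η ∈ Ioo (0:ℝ) 1 := TIoo η hη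
    have hmem : 1 - T η ∈ Ioo (0:ℝ) 1 := ⟨by linarith [hTη.2], by linarith [hTη.1]⟩
    have hk : 0 < ψ'' (1 - T η) := hpos (1 - T η) hmem
    have hb := hψ'' (T η) hTη
    set θ := T η
    rcases le_or_gt (θ ^ 2 + θ * c) 0 with h | h
    · have : (0:ℝ) < (ψ'' (1 - θ))⁻¹ := inv_pos.2 hk
      nlinarith
    · have h1 : ψ'' (1 - θ) * (θ ^ 2 + θ * c) ≤ 1 := by
        have := (le_div_iff₀ h).mp hb
        linarith
      have h2 : θ ^ 2 + θ * c ≤ (ψ'' (1 - θ))⁻¹ := by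
        rw [← one_div]
        rw [le_div_iff₀ hk]
        nlinarith [h1]
      nlinarith
  -- definitions of Q and V
  set Q : ℝ → ℝ := fun η => Real.exp (c * η + G ψ η) * T η with hQdef
  have hQnn : ∀ η, 0 ≤ Q η := fun η => mul_nonneg (Real.exp_nonneg _) (Tmem η).1
  have hQcont : Continuous Q := by
    apply Continuous.mul _ Tcont
    exact Real.continuous_exp.comp ((continuous_const.mul continuous_id).add hGcont)
  have hQd : ∀ η ∈ Ioo 0 M, HasDerivAt Q
      (Real.exp (c * η + G ψ η) * ((c + T η) * T η - (ψ'' (1 - T η))⁻¹)) η := by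
    intro η hη
    have h1 : HasDerivAt (fun η : ℝ => c * η + G ψ η) (c + T η) η := by
      have := ((hasDerivAt_id η).const_mul c).add (hGd η)
      simp only [mul_one] at this
      exact this
    have h2 := (Real.hasDerivAt_exp (c * η + G ψ η)).comp η h1
    have h3 := h2.mul (hTd η hη)
    refine h3.congr_deriv ?_
    simp only [Function.comp]
    ring
  have hQanti0 : AntitoneOn Q (Icc 0 M) := by
    apply antitoneOn_of_deriv_nonpos (convex_Icc 0 M) hQcont.continuousOn
    · rw [interior_Icc]
      exact fun x hx => (hQd x hx).differentiableAt.differentiableWithinAt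
    · rw [interior_Icc]
      intro x hx
      rw [(hQd x hx).deriv]
      exact mul_nonpos_of_nonneg_of_nonpos (Real.exp_nonneg _) (hkey x hx)
  have hQM : Q M = 0 := by
    simp [hQdef, Tge M le_rfl]
  have hQanti : ∀ a b : ℝ, 0 ≤ a → a ≤ b → Q b ≤ Q a := by
    intro a b ha hab
    rcases le_or_gt b M with hb | hb
    · exact hQanti0 ⟨ha, hab.trans hb⟩ ⟨ha.trans hab, hb⟩ hab
    · have hQb : Q b = 0 := by simp [hQdef, Tge b hb.le]
      rw [hQb]; exact hQnn a
  set V : ℝ → ℝ := fun r => Real.exp (-(c * ξ r)) * ξ' r with hVdef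
  have hVd : ∀ r ∈ Ioo 0 r₀, HasDerivAt V
      (Real.exp (-(c * ξ r)) * (ξ'' r - c * ξ' r ^ 2)) r := by
    intro r hr
    have h1 : HasDerivAt (fun r : ℝ => -(c * ξ r)) (-(c * ξ' r)) r :=
      ((hξd1 r hr).const_mul c).neg
    have h2 := (Real.hasDerivAt_exp (-(c * ξ r))).comp r h1
    have h3 := h2.mul (hξd2 r hr)
    refine h3.congr_deriv ?_
    simp only [Function.comp]
    ring
  have hVanti : AntitoneOn V (Ioo 0 r₀) := by
    apply antitoneOn_of_deriv_nonpos (convex_Ioo 0 r₀)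
      (fun r hr => (hVd r hr).continuousAt.continuousWithinAt)
    · rw [isOpen_Ioo.interior_eq]
      exact fun r hr => (hVd r hr).differentiableAt.differentiableWithinAt
    · rw [isOpen_Ioo.interior_eq]
      intro r hr
      rw [(hVd r hr).deriv]
      apply mul_nonpos_of_nonneg_of_nonpos (Real.exp_nonneg _)
      have := hcξ r hr
      linarith
  have hFd : ∀ r ∈ Ioo 0 r₀,
      HasDerivAt (fun r => Real.exp (G ψ (ξ r))) (Q (ξ r) * V r) r := by
    intro r hr
    have h1 := (hGd (ξ r)).comp r (hξd1 r hr)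
    have h2 := (Real.hasDerivAt_exp (G ψ (ξ r))).comp r h1
    convert h2 using 1
    show Q (ξ r) * V r = Real.exp (G ψ (ξ r)) * (T (ξ r) * ξ' r)
    rw [hQdef, hVdef]
    have : Real.exp (c * ξ r + G ψ (ξ r)) * Real.exp (-(c * ξ r)) = Real.exp (G ψ (ξ r)) := by
      rw [← Real.exp_add]; congr 1; ring
    calc Real.exp (c * ξ r + G ψ (ξ r)) * T (ξ r) * (Real.exp (-(c * ξ r)) * ξ' r)
        = Real.exp (c * ξ r + G ψ (ξ r)) * Real.exp (-(c * ξ r)) * (T (ξ r) * ξ' r) := by ring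
      _ = Real.exp (G ψ (ξ r)) * (T (ξ r) * ξ' r) := by rw [this]
    all_goals rfl
  have hderivF : AntitoneOn (deriv (fun r => Real.exp (G ψ (ξ r)))) (Ioo 0 r₀) := by
    intro a ha b hb hab
    rw [(hFd a ha).deriv, (hFd b hb).deriv]
    have hQa := hQnn (ξ a)
    have hQb := hQnn (ξ b)
    have hIccsub : Icc a b ⊆ Ioo 0 r₀ := fun x hx => ⟨lt_of_lt_of_le ha.1 hx.1, lt_of_le_of_lt hx.2 hb.2⟩
    rcases le_or_gt 0 (V b) with hVb | hVb
    · have hmono : MonotoneOn ξ (Icc a b) := by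
        apply monotoneOn_of_deriv_nonneg (convex_Icc a b)
          (fun x hx => (hξd1 x (hIccsub hx)).continuousAt.continuousWithinAt)
        · rw [interior_Icc]
          exact fun x hx => (hξd1 x (hIccsub (Ioo_subset_Icc_self hx))).differentiableAt.differentiableWithinAt
        · rw [interior_Icc]
          intro x hx
          have hxm := hIccsub (Ioo_subset_Icc_self hx)
          rw [(hξd1 x hxm).deriv]
          have hVx : V b ≤ V x := hVanti hxm hb hx.2.le
          have : 0 ≤ Real.exp (-(c * ξ x)) * ξ' x := le_trans hVb hVx
          nlinarith [Real.exp_pos (-(c * ξ x))]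
      have hξab : ξ a ≤ ξ b := hmono ⟨le_rfl, hab⟩ ⟨hab, le_rfl⟩ hab
      have hQab : Q (ξ b) ≤ Q (ξ a) := hQanti _ _ (hξnn a (Ioo_subset_Icc_self ha)) hξab
      have hVab : V b ≤ V a := hVanti ha hb hab
      calc Q (ξ b) * V b ≤ Q (ξ a) * V b := mul_le_mul_of_nonneg_right hQab hVb
        _ ≤ Q (ξ a) * V a := mul_le_mul_of_nonneg_left hVab hQa
    · rcases le_or_gt 0 (V a) with hVa | hVa
      · calc Q (ξ b) * V b ≤ 0 := mul_nonpos_of_nonneg_of_nonpos hQb hVb.le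
          _ ≤ Q (ξ a) * V a := mul_nonneg hQa hVa
      · have hanti : AntitoneOn ξ (Icc a b) := by
          apply antitoneOn_of_deriv_nonpos (convex_Icc a b)
            (fun x hx => (hξd1 x (hIccsub hx)).continuousAt.continuousWithinAt)
          · rw [interior_Icc]
            exact fun x hx => (hξd1 x (hIccsub (Ioo_subset_Icc_self hx))).differentiableAt.differentiableWithinAt
          · rw [interior_Icc]
            intro x hx
            have hxm := hIccsub (Ioo_subset_Icc_self hx)
            rw [(hξd1 x hxm).deriv]
            have hVx : V x ≤ V a := hVanti ha hxm hx.1.le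
            have hVx0 : Real.exp (-(c * ξ x)) * ξ' x ≤ 0 := le_trans hVx hVa.le
            nlinarith [Real.exp_pos (-(c * ξ x))]
        have hξba : ξ b ≤ ξ a := hanti ⟨le_rfl, hab⟩ ⟨hab, le_rfl⟩ hab
        have hQ' : Q (ξ a) ≤ Q (ξ b) := hQanti _ _ (hξnn b (Ioo_subset_Icc_self hb)) hξba
        have hVab : V b ≤ V a := hVanti ha hb hab
        calc Q (ξ b) * V b ≤ Q (ξ b) * V a := mul_le_mul_of_nonneg_left hVab hQb
          _ ≤ Q (ξ a) * V a := mul_le_mul_of_nonpos_right hQ' hVa.le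
  apply AntitoneOn.concaveOn_of_deriv (convex_Icc 0 r₀)
  · exact (Real.continuous_exp.comp hGcont).comp_continuousOn hξcont
  · rw [interior_Icc]
    exact fun r hr => (hFd r hr).differentiableAt.differentiableWithinAt
  · rw [interior_Icc]
    exact hderivF
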